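/- Let A = (Σ, q, N, δ) be a linear quantum cellular automaton with neighborhood N = (a_1,…,a_r) and time evolution U_A(d,c) = ∏_{i∈ℤ} [δ(c_{i+N})](d_i) on finitely supported configurations. For configurations c, c' and any finite interval I of ℤ containing the extensions of the interval domains of both c and c' (i.e., containing [min supp(c) − a_r, max supp(c) − a_1] and the analogous interval for c'), the inner product of the corresponding columns satisfies ⟨U_A(·,c), U_A(·,c')⟩ = ∏_{i∈I} ⟨δ(c_{i+N}), δ(c'_{i+N})⟩. -/

import Mathlib

/-- Lemma 1: the inner product of two columns of the time evolution operator of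
an LQCA equals the finite product of the inner products of the local images,
over any finite interval `I = [a,b]` outside of which both configurations have
quiescent neighborhoods (in particular any interval containing the extensions
of the interval domains of `c` and `c'`). -/
theorem column_inner_eq_prod {S : Type*} [Fintype S] [DecidableEq S]
    (q : S) {r : ℕ} (hr : 1 ≤ r) (N : Fin r → ℤ) (hN : StrictMono N)
    (δ : (Fin r → S) → EuclideanSpace ℂ S)
    (hq : ∀ x, δ (fun _ => q) x = if x = q then 1 else 0)
    (c c' : {c : ℤ → S // {i | c i ≠ q}.Finite}) (a b : ℤ)
    (hI : ∀ i : ℤ, i ∉ Finset.Icc a b →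
        (∀ j, c.1 (i + N j) = q) ∧ (∀ j, c'.1 (i + N j) = q)) :
    (∑' d : {c : ℤ → S // {i | c i ≠ q}.Finite},
        (starRingEnd ℂ) (∏ᶠ i : ℤ, δ (fun j => c.1 (i + N j)) (d.1 i)) *
          ∏ᶠ i : ℤ, δ (fun j => c'.1 (i + N j)) (d.1 i))
      = ∏ i ∈ Finset.Icc a b,
          inner (𝕜 := ℂ) (δ fun j => c.1 (i + N j)) (δ fun j => c'.1 (i + N j)) := by
  classical
  set I : Finset ℤ := Finset.Icc a b with hIdef
  -- Key computation of the finitary products.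
  have key : ∀ (cc : ℤ → S), (∀ i ∉ I, ∀ j, cc (i + N j) = q) →
      ∀ d : {c : ℤ → S // {i | c i ≠ q}.Finite},
      (∏ᶠ i : ℤ, δ (fun j => cc (i + N j)) (d.1 i))
        = if ∀ i ∉ I, d.1 i = q then ∏ i ∈ I, δ (fun j => cc (i + N j)) (d.1 i)
          else 0 := by
    intro cc hcc d
    have hq' : ∀ i ∉ I, ∀ s, δ (fun j => cc (i + N j)) s = if s = q then 1 else 0 := by
      intro i hi s
      have h : (fun j => cc (i + N j)) = fun _ => q := funext (hcc i hi)
      rw [h, hq]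
    by_cases hd : ∀ i ∉ I, d.1 i = q
    · rw [if_pos hd]
      apply finprod_eq_prod_of_mulSupport_subset
      intro i hi
      simp only [Function.mem_mulSupport] at hi
      by_contra hiI
      apply hi
      rw [hq' i hiI, hd i hiI, if_pos rfl]
    · rw [if_neg hd]
      push_neg at hd
      obtain ⟨i₀, hi₀I, hi₀⟩ := hd
      have hT : (Function.mulSupport fun i => δ (fun j => cc (i + N j)) (d.1 i))
          ⊆ ↑(I ∪ d.2.toFinset) := by
        intro i hi
        simp only [Function.mem_mulSupport] at hi
        simp only [Finset.coe_union, Set.mem_union, Finset.mem_coe,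
          Set.Finite.mem_toFinset, Set.mem_setOf_eq]
        by_contra h
        push_neg at h
        apply hi
        rw [hq' i h.1]
        simp [h.2]
      rw [finprod_eq_prod_of_mulSupport_subset _ hT]
      refine Finset.prod_eq_zero (i := i₀) ?_ ?_
      · simp only [Finset.mem_union, Set.Finite.mem_toFinset, Set.mem_setOf_eq]
        exact Or.inr hi₀
      · rw [hq' i₀ hi₀I, if_neg hi₀]
  have hc := key c.1 (fun i hi => (hI i hi).1)
  have hc' := key c'.1 (fun i hi => (hI i hi).2)
  -- The extension map from local functions to configurations.
  set e : ({x // x ∈ I} → S) → {c : ℤ → S // {i | c i ≠ q}.Finite} :=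
    fun g => ⟨fun i => if h : i ∈ I then g ⟨i, h⟩ else q, by
      apply Set.Finite.subset I.finite_toSet
      intro i hi
      simp only [Set.mem_setOf_eq] at hi
      by_contra h
      exact hi (dif_neg (by simpa using h))⟩ with he
  have he_apply : ∀ g i (h : i ∈ I), (e g).1 i = g ⟨i, h⟩ := by
    intro g i h; simp [he, dif_pos h]
  have he_out : ∀ g i, i ∉ I → (e g).1 i = q := by
    intro g i h; simp [he, dif_neg h]
  have he_inj : Function.Injective e := by
    intro g₁ g₂ hgg
    funext ⟨i, hi⟩
    have := congrFun (congrArg Subtype.val hgg) i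
    rwa [he_apply g₁ i hi, he_apply g₂ i hi] at this
  -- the summand vanishes off the image of `e`
  have hzero : ∀ d ∉ Finset.univ.image e,
      (starRingEnd ℂ) (∏ᶠ i : ℤ, δ (fun j => c.1 (i + N j)) (d.1 i)) *
        (∏ᶠ i : ℤ, δ (fun j => c'.1 (i + N j)) (d.1 i)) = 0 := by
    intro d hd
    have hnot : ¬ ∀ i ∉ I, d.1 i = q := by
      intro hall
      apply hd
      refine Finset.mem_image.mpr ⟨fun i => d.1 i.1, Finset.mem_univ _, ?_⟩
      apply Subtype.ext
      funext i
      by_cases h : i ∈ I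
      · exact he_apply (fun i => d.1 i.1) i h
      · exact (he_out (fun i => d.1 i.1) i h).trans (hall i h).symm
    rw [hc d, if_neg hnot, map_zero, zero_mul]
  rw [tsum_eq_sum hzero, Finset.sum_image (fun x _ y _ h => he_inj h)]
  have hcond : ∀ g : {x // x ∈ I} → S, ∀ i ∉ I, (e g).1 i = q := fun g i h => he_out g i h
  -- compute each term
  have hterm : ∀ g : {x // x ∈ I} → S,
      (starRingEnd ℂ) (∏ᶠ i : ℤ, δ (fun j => c.1 (i + N j)) ((e g).1 i)) *
        (∏ᶠ i : ℤ, δ (fun j => c'.1 (i + N j)) ((e g).1 i))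
      = ∏ i : {x // x ∈ I},
          (starRingEnd ℂ) (δ (fun j => c.1 (i.1 + N j)) (g i)) *
            δ (fun j => c'.1 (i.1 + N j)) (g i) := by
    intro g
    rw [hc (e g), hc' (e g), if_pos (hcond g), if_pos (hcond g), map_prod,
      ← Finset.prod_mul_distrib, ← Finset.prod_coe_sort]
    refine Finset.prod_congr rfl ?_
    intro i _
    have h5 : (e g).1 i.1 = g i := he_apply g i.1 i.2
    rw [h5]
  rw [Finset.sum_congr rfl (fun g _ => hterm g)]
  -- right hand side
  have hrhs : (∏ i ∈ I,
      inner (𝕜 := ℂ) (δ fun j => c.1 (i + N j)) (δ fun j => c'.1 (i + N j)))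
      = ∏ i : {x // x ∈ I}, ∑ s : S,
          (starRingEnd ℂ) (δ (fun j => c.1 (i.1 + N j)) s) *
            δ (fun j => c'.1 (i.1 + N j)) s := by
    rw [← Finset.prod_coe_sort]
    refine Finset.prod_congr rfl ?_
    intro i _
    simp [PiLp.inner_apply, RCLike.inner_apply]
    exact Finset.sum_congr rfl (fun x _ => mul_comm _ _)
  rw [hrhs, Fintype.prod_sum]
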